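/- arXiv:2503.21285 — 4 statements merged into one kernel-verified Lean document; each statement's English description precedes it below -/
import Mathlib

section
/- Let G be an additive subgroup of ℂ that is not discrete (i.e., G with the subspace topology is not a discrete topological space). Then the set of real parts {Re z : z ∈ G} is dense in ℝ, or the set of imaginary parts {Im z : z ∈ G} is dense in ℝ. -/
lemma cyclic_small_eq_zero (a x : ℝ) (hx : x ∈ AddSubgroup.closure ({a} : Set ℝ))
    (hsmall : |x| < if a = 0 then 1 else |a|) : x = 0 := by
  rw [AddSubgroup.mem_closure_singleton] at hx
  obtain ⟨n, rfl⟩ := hx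
  by_cases ha : a = 0
  · simp [ha]
  · rw [if_neg ha] at hsmall
    rcases eq_or_ne n 0 with hn | hn
    · simp [hn]
    · exfalso
      have : |a| ≤ |n • a| := by
        rw [zsmul_eq_mul, abs_mul]
        have h1 : (1 : ℝ) ≤ |(n : ℝ)| := by
          rw [← Int.cast_abs]
          exact_mod_cast Int.one_le_abs hn
        nlinarith [abs_nonneg a]
      linarith

/-- If an additive subgroup of `ℂ` is not discrete, then its set of real parts is
dense in `ℝ`, or its set of imaginary parts is dense in `ℝ`. -/
theorem dense_re_or_im_of_not_discrete (G : AddSubgroup ℂ)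
    (h : ¬ DiscreteTopology G) :
    Dense (Complex.re '' (G : Set ℂ)) ∨ Dense (Complex.im '' (G : Set ℂ)) := by
  by_contra hc
  push_neg at hc
  obtain ⟨hre, him⟩ := hc
  set fre : ℂ →+ ℝ := AddMonoidHom.mk' Complex.re (by simp)
  set fim : ℂ →+ ℝ := AddMonoidHom.mk' Complex.im (by simp)
  have hGre : ((G.map fre : AddSubgroup ℝ) : Set ℝ) = Complex.re '' (G : Set ℂ) :=
    AddSubgroup.coe_map _ _
  have hGim : ((G.map fim : AddSubgroup ℝ) : Set ℝ) = Complex.im '' (G : Set ℂ) :=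
    AddSubgroup.coe_map _ _
  obtain ⟨a, ha⟩ : ∃ a : ℝ, G.map fre = AddSubgroup.closure {a} := by
    rcases (G.map fre).dense_or_cyclic with hd | hcy
    · exact absurd (hGre ▸ hd) hre
    · exact hcy
  obtain ⟨b, hb⟩ : ∃ b : ℝ, G.map fim = AddSubgroup.closure {b} := by
    rcases (G.map fim).dense_or_cyclic with hd | hcy
    · exact absurd (hGim ▸ hd) him
    · exact hcy
  apply h
  apply discreteTopology_of_isOpen_singleton_zero
  rw [Metric.isOpen_singleton_iff]
  set εa : ℝ := if a = 0 then 1 else |a| with hεa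
  set εb : ℝ := if b = 0 then 1 else |b| with hεb
  have hεa0 : 0 < εa := by
    rw [hεa]; split <;> simp_all
  have hεb0 : 0 < εb := by
    rw [hεb]; split <;> simp_all
  refine ⟨min εa εb, lt_min hεa0 hεb0, fun g hg => ?_⟩
  have hnorm : ‖(g : ℂ)‖ < min εa εb := by
    simpa [Subtype.dist_eq, Complex.dist_eq] using hg
  have hre0 : (g : ℂ).re = 0 := by
    apply cyclic_small_eq_zero a
    · rw [← ha]; exact ⟨g, g.2, rfl⟩
    · exact lt_of_le_of_lt (Complex.abs_re_le_norm _) (lt_of_lt_of_le hnorm (min_le_left _ _))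
  have him0 : (g : ℂ).im = 0 := by
    apply cyclic_small_eq_zero b
    · rw [← hb]; exact ⟨g, g.2, rfl⟩
    · exact lt_of_le_of_lt (Complex.abs_im_le_norm _) (lt_of_lt_of_le hnorm (min_le_right _ _))
  ext
  exact Complex.ext hre0 him0
end

section
/- Let g ≥ 2 and d ≥ 2g be integers. Define permutations r, u of {1, …, d} by: r is the cycle (1 2 … 2g−1) (cyclically permuting 1, …, 2g−1 and fixing 2g, …, d), and u(i) = 2g−1−i for 1 ≤ i ≤ 2g−2, u(i) = i+1 for 2g−1 ≤ i ≤ d−1, u(d) = 2g−1. Then the commutator ⁅r, u⁆ = r·u·r⁻¹·u⁻¹ has cycle type {g, g}, i.e., it is a product of two disjoint g-cycles and fixes the remaining d−2g points, and the subgroup generated by r and u acts transitively on {1, …, d}. -/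
set_option maxHeartbeats 1600000

open scoped commutatorElement


/-- For `g ≥ 2` and `d ≥ 2g`, let `r, u` be the permutations of `{1, …, d}` given by
`r = (1 2 … 2g−1)` and `u(i) = 2g−1−i` for `1 ≤ i ≤ 2g−2`, `u(i) = i+1` for
`2g−1 ≤ i ≤ d−1`, `u(d) = 2g−1`. Then the commutator `⁅r, u⁆ = r u r⁻¹ u⁻¹` has cycle
type `{g, g}` (two disjoint `g`-cycles, fixing the remaining `d − 2g` points), and the
subgroup generated by `r` and `u` acts transitively on `{1, …, d}`. -/
theorem commutator_cycleType_two_g_cycles (g d : ℕ) (hg : 2 ≤ g) (hd : 2 * g ≤ d)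
    (r u : Equiv.Perm {i : ℕ // i ∈ Finset.Icc 1 d})
    (hr : ∀ x, ((r x : ℕ) =
      if (x : ℕ) < 2 * g - 1 then (x : ℕ) + 1
      else if (x : ℕ) = 2 * g - 1 then 1
      else (x : ℕ)))
    (hu : ∀ x, ((u x : ℕ) =
      if (x : ℕ) ≤ 2 * g - 2 then 2 * g - 1 - (x : ℕ)
      else if (x : ℕ) < d then (x : ℕ) + 1
      else 2 * g - 1)) :
    (⁅r, u⁆).cycleType = {g, g} ∧
    ∀ x y : {i : ℕ // i ∈ Finset.Icc 1 d},
      ∃ h ∈ Subgroup.closure ({r, u} : Set (Equiv.Perm {i : ℕ // i ∈ Finset.Icc 1 d})),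
        h x = y := by
  classical
  have hb : ∀ x : {i : ℕ // i ∈ Finset.Icc 1 d}, 1 ≤ (x:ℕ) ∧ (x:ℕ) ≤ d :=
    fun x => Finset.mem_Icc.mp x.2
  -- inverse formulas
  have hri : ∀ x, ((r⁻¹ x : ℕ) =
      if (x:ℕ) = 1 then 2*g-1 else if (x:ℕ) ≤ 2*g-1 then (x:ℕ)-1 else (x:ℕ)) := by
    intro x
    have h := hr (r⁻¹ x)
    rw [show r (r⁻¹ x) = x from Equiv.apply_symm_apply r x] at h
    have h1 := hb x; have h2 := hb (r⁻¹ x)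
    split_ifs at h ⊢ <;> omega
  have hui : ∀ x, ((u⁻¹ x : ℕ) =
      if (x:ℕ) ≤ 2*g-2 then 2*g-1-(x:ℕ) else if (x:ℕ) = 2*g-1 then d else (x:ℕ)-1) := by
    intro x
    have h := hu (u⁻¹ x)
    rw [show u (u⁻¹ x) = x from Equiv.apply_symm_apply u x] at h
    have h1 := hb x; have h2 := hb (u⁻¹ x)
    split_ifs at h ⊢ <;> omega
  -- commutator formula
  have hc : ∀ x, ((⁅r, u⁆ x : ℕ) =
      if (x:ℕ) < 2*g-2 then (x:ℕ)+2
      else if (x:ℕ) = 2*g-2 then 2*g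
      else if (x:ℕ) = 2*g-1 then 1
      else if (x:ℕ) = 2*g then 2
      else (x:ℕ)) := by
    intro x
    have hx : ⁅r, u⁆ x = r (u (r⁻¹ (u⁻¹ x))) := by
      simp [commutatorElement_def, Equiv.Perm.mul_apply]
    rw [hx]
    have e1 := hui x
    have e2 := hri (u⁻¹ x)
    have e3 := hu (r⁻¹ (u⁻¹ x))
    have e4 := hr (u (r⁻¹ (u⁻¹ x)))
    have b0 := hb x; have b1 := hb (u⁻¹ x); have b2 := hb (r⁻¹ (u⁻¹ x))
    have b3 := hb (u (r⁻¹ (u⁻¹ x)))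
    split_ifs at e1 e2 e3 e4 ⊢ <;> omega
  set c := ⁅r, u⁆ with hcdef
  obtain ⟨a, ha1⟩ : ∃ a : {i : ℕ // i ∈ Finset.Icc 1 d}, (a:ℕ) = 1 :=
    ⟨⟨1, Finset.mem_Icc.mpr (by omega)⟩, rfl⟩
  obtain ⟨b, hb1⟩ : ∃ b : {i : ℕ // i ∈ Finset.Icc 1 d}, (b:ℕ) = 2 :=
    ⟨⟨2, Finset.mem_Icc.mpr (by omega)⟩, rfl⟩
  -- parity predicates
  set P1 : {i : ℕ // i ∈ Finset.Icc 1 d} → Prop := fun x => (x:ℕ) % 2 = 1 ∧ (x:ℕ) ≤ 2*g-1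
    with hP1def
  set P2 : {i : ℕ // i ∈ Finset.Icc 1 d} → Prop := fun x => (x:ℕ) % 2 = 0 ∧ (x:ℕ) ≤ 2*g
    with hP2def
  have hP1c : ∀ x, P1 x → P1 (c x) := by
    intro x hx
    have h := hc x
    simp only [hP1def] at hx ⊢
    split_ifs at h <;> omega
  have hP2c : ∀ x, P2 x → P2 (c x) := by
    intro x hx
    have h := hc x
    simp only [hP2def] at hx ⊢
    split_ifs at h <;> omega
  have hP1ci : ∀ x, P1 x → P1 (c⁻¹ x) := by
    intro x hx
    have h := hc (c⁻¹ x)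
    rw [show c (c⁻¹ x) = x from Equiv.apply_symm_apply c x] at h
    have h2 := hb (c⁻¹ x)
    simp only [hP1def] at hx ⊢
    split_ifs at h <;> omega
  have hP2ci : ∀ x, P2 x → P2 (c⁻¹ x) := by
    intro x hx
    have h := hc (c⁻¹ x)
    rw [show c (c⁻¹ x) = x from Equiv.apply_symm_apply c x] at h
    have h2 := hb (c⁻¹ x)
    simp only [hP2def] at hx ⊢
    split_ifs at h <;> omega
  -- zpow invariance
  have hnpow : ∀ (P : _ → Prop), (∀ x, P x → P (c x)) → ∀ (n : ℕ) x, P x → P ((c^n) x) := by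
    intro P hP n
    induction n with
    | zero => simpa using fun x hx => hx
    | succ n ih =>
      intro x hx
      rw [pow_succ', Equiv.Perm.mul_apply]
      exact hP _ (ih x hx)
  have hnpowi : ∀ (P : _ → Prop), (∀ x, P x → P (c⁻¹ x)) → ∀ (n : ℕ) x, P x → P ((c⁻¹^n) x) := by
    intro P hP n
    induction n with
    | zero => simpa using fun x hx => hx
    | succ n ih =>
      intro x hx
      rw [pow_succ', Equiv.Perm.mul_apply]
      exact hP _ (ih x hx)
  have hzpow : ∀ (P : _ → Prop), (∀ x, P x → P (c x)) → (∀ x, P x → P (c⁻¹ x)) →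
      ∀ (n : ℤ) x, P x → P ((c^n) x) := by
    intro P h1 h2 n x hx
    rcases n with n | n
    · rw [Int.ofNat_eq_coe, zpow_natCast]
      exact hnpow P h1 n x hx
    · rw [zpow_negSucc, ← inv_pow]
      exact hnpowi P h2 (n+1) x hx
  have hSC1 : ∀ x, c.SameCycle a x → P1 x := by
    rintro x ⟨n, rfl⟩
    exact hzpow P1 hP1c hP1ci n a (by simp only [hP1def]; omega)
  have hSC2 : ∀ x, c.SameCycle b x → P2 x := by
    rintro x ⟨n, rfl⟩
    exact hzpow P2 hP2c hP2ci n b (by simp only [hP2def]; omega)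
  -- explicit powers
  have hpow1 : ∀ k, k ≤ g-1 → (((c^k) a : ℕ)) = 2*k+1 := by
    intro k
    induction k with
    | zero => simpa using ha1
    | succ k ih =>
      intro hk
      rw [pow_succ', Equiv.Perm.mul_apply]
      have h := hc ((c^k) a)
      have hik := ih (by omega)
      split_ifs at h <;> omega
  have hpow2 : ∀ k, k ≤ g-1 → (((c^k) b : ℕ)) = 2*k+2 := by
    intro k
    induction k with
    | zero => simpa using hb1
    | succ k ih =>
      intro hk
      rw [pow_succ', Equiv.Perm.mul_apply]
      have h := hc ((c^k) b)
      have hik := ih (by omega)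
      split_ifs at h <;> omega
  have hSC1' : ∀ x, P1 x → c.SameCycle a x := by
    intro x hx
    simp only [hP1def] at hx
    refine ⟨((((x:ℕ)-1)/2 : ℕ) : ℤ), ?_⟩
    rw [zpow_natCast]
    exact Subtype.ext (by rw [hpow1 _ (by omega)]; omega)
  have hSC2' : ∀ x, P2 x → c.SameCycle b x := by
    intro x hx
    simp only [hP2def] at hx
    have hx1 := hb x
    refine ⟨((((x:ℕ)-2)/2 : ℕ) : ℤ), ?_⟩
    rw [zpow_natCast]
    exact Subtype.ext (by rw [hpow2 _ (by omega)]; omega)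
  have hca : c a ≠ a := by
    intro h
    have h1 := hc a
    rw [h] at h1
    split_ifs at h1 <;> omega
  have hcb : c b ≠ b := by
    intro h
    have h1 := hc b
    rw [h] at h1
    split_ifs at h1 <;> omega
  -- supports of the two cycles
  have hmem1 : ∀ x, x ∈ (c.cycleOf a).support ↔ P1 x := by
    intro x
    rw [Equiv.Perm.mem_support_cycleOf_iff]
    exact ⟨fun h => hSC1 x h.1, fun h => ⟨hSC1' x h, Equiv.Perm.mem_support.mpr hca⟩⟩
  have hmem2 : ∀ x, x ∈ (c.cycleOf b).support ↔ P2 x := by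
    intro x
    rw [Equiv.Perm.mem_support_cycleOf_iff]
    exact ⟨fun h => hSC2 x h.1, fun h => ⟨hSC2' x h, Equiv.Perm.mem_support.mpr hcb⟩⟩
  have hfix1 : ∀ x, ¬ P1 x → c.cycleOf a x = x := by
    intro x hx
    by_contra h
    exact hx ((hmem1 x).mp (Equiv.Perm.mem_support.mpr h))
  have hfix2 : ∀ x, ¬ P2 x → c.cycleOf b x = x := by
    intro x hx
    by_contra h
    exact hx ((hmem2 x).mp (Equiv.Perm.mem_support.mpr h))
  have hcard1 : (c.cycleOf a).support.card = g := by
    have hs : (c.cycleOf a).support =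
        (Finset.univ : Finset {i : ℕ // i ∈ Finset.Icc 1 d}).filter
          (fun x : {i : ℕ // i ∈ Finset.Icc 1 d} => (x:ℕ) % 2 = 1 ∧ (x:ℕ) ≤ 2*g-1) := by
      ext x
      simp [hmem1 x, hP1def]
    rw [hs]
    conv_rhs => rw [← Finset.card_range g]
    refine Finset.card_bij' (fun x _ => ((x:ℕ)-1)/2)
      (fun k hk => ⟨2*k+1, Finset.mem_Icc.mpr
        (by have := Finset.mem_range.mp hk; omega)⟩) ?_ ?_ ?_ ?_
    · intro x hx
      simp only [Finset.mem_filter] at hx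
      simp only [Finset.mem_range]
      omega
    · intro k hk
      simp only [Finset.mem_range] at hk
      simp only [Finset.mem_filter, Finset.mem_univ, true_and]
      omega
    · intro x hx
      simp only [Finset.mem_filter] at hx
      exact Subtype.ext (by simp; omega)
    · intro k hk
      simp only [Finset.mem_range] at hk
      simp
  have hcard2 : (c.cycleOf b).support.card = g := by
    have hs : (c.cycleOf b).support =
        (Finset.univ : Finset {i : ℕ // i ∈ Finset.Icc 1 d}).filter
          (fun x : {i : ℕ // i ∈ Finset.Icc 1 d} => (x:ℕ) % 2 = 0 ∧ (x:ℕ) ≤ 2*g) := by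
      ext x
      simp [hmem2 x, hP2def]
    rw [hs]
    conv_rhs => rw [← Finset.card_range g]
    refine Finset.card_bij' (fun x _ => ((x:ℕ)-2)/2)
      (fun k hk => ⟨2*k+2, Finset.mem_Icc.mpr
        (by have := Finset.mem_range.mp hk; omega)⟩) ?_ ?_ ?_ ?_
    · intro x hx
      simp only [Finset.mem_filter] at hx
      simp only [Finset.mem_range]
      have := hb x
      omega
    · intro k hk
      simp only [Finset.mem_range] at hk
      simp only [Finset.mem_filter, Finset.mem_univ, true_and]
      omega
    · intro x hx
      simp only [Finset.mem_filter] at hx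
      have := hb x
      exact Subtype.ext (by simp; omega)
    · intro k hk
      simp only [Finset.mem_range] at hk
      simp
  -- disjointness and product
  have hP12 : ∀ x, P1 x → ¬ P2 x := by
    intro x h1 h2
    simp only [hP1def] at h1
    simp only [hP2def] at h2
    omega
  have hdisj : (c.cycleOf a).Disjoint (c.cycleOf b) := by
    intro x
    by_cases h1 : P1 x
    · exact Or.inr (hfix2 x (hP12 x h1))
    · exact Or.inl (hfix1 x h1)
  have hprod : c.cycleOf a * c.cycleOf b = c := by
    apply Equiv.ext
    intro x
    rw [Equiv.Perm.mul_apply]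
    by_cases h1 : P1 x
    · rw [hfix2 x (hP12 x h1), Equiv.Perm.cycleOf_apply, if_pos (hSC1' x h1)]
    · by_cases h2 : P2 x
      · rw [Equiv.Perm.cycleOf_apply c b x, if_pos (hSC2' x h2)]
        exact hfix1 _ (fun hp => hP12 _ hp (hP2c x h2))
      · have hx1 := hb x
        have hbig : 2*g < (x:ℕ) := by
          simp only [hP1def] at h1
          simp only [hP2def] at h2
          omega
        have hcx : c x = x := Subtype.ext (by have := hc x; split_ifs at this <;> omega)
        rw [hfix2 x h2, hfix1 x h1, hcx]
  have hcyc1 : (c.cycleOf a).IsCycle := Equiv.Perm.isCycle_cycleOf c hca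
  have hcyc2 : (c.cycleOf b).IsCycle := Equiv.Perm.isCycle_cycleOf c hcb
  constructor
  · have hct := Equiv.Perm.cycleType_eq (σ := c) [c.cycleOf a, c.cycleOf b]
      (by simp [hprod])
      (by
        intro s hs
        simp only [List.mem_cons, List.not_mem_nil, or_false] at hs
        rcases hs with rfl | rfl
        · exact hcyc1
        · exact hcyc2)
      (by simp [List.pairwise_cons, hdisj])
    rw [hct]
    simp [hcard1, hcard2]
    rfl
  · -- transitivity
    have hrmem : r ∈ Subgroup.closure ({r, u} : Set (Equiv.Perm {i : ℕ // i ∈ Finset.Icc 1 d})) :=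
      Subgroup.subset_closure (Set.mem_insert _ _)
    have humem : u ∈ Subgroup.closure ({r, u} : Set (Equiv.Perm {i : ℕ // i ∈ Finset.Icc 1 d})) :=
      Subgroup.subset_closure (Set.mem_insert_of_mem _ rfl)
    have hrpow : ∀ k, k ≤ 2*g-2 → (((r^k) a : ℕ)) = k+1 := by
      intro k
      induction k with
      | zero => simpa using ha1
      | succ k ih =>
        intro hk
        rw [pow_succ', Equiv.Perm.mul_apply]
        have h := hr ((r^k) a)
        have hik := ih (by omega)
        split_ifs at h <;> omega
    have hupow : ∀ m, m ≤ d-(2*g-1) → (((u^m) ((r^(2*g-2)) a) : ℕ)) = 2*g-1+m := by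
      intro m
      induction m with
      | zero =>
        intro _
        have h0 := hrpow (2*g-2) le_rfl
        simp only [pow_zero, Equiv.Perm.coe_one, id_eq]
        omega
      | succ m ih =>
        intro hm
        rw [pow_succ', Equiv.Perm.mul_apply]
        have h := hu ((u^m) ((r^(2*g-2)) a))
        have hik := ih (by omega)
        split_ifs at h <;> omega
    have reach : ∀ y : {i : ℕ // i ∈ Finset.Icc 1 d},
        ∃ h ∈ Subgroup.closure ({r, u} : Set (Equiv.Perm {i : ℕ // i ∈ Finset.Icc 1 d})),
          h a = y := by
      intro y
      have hy1 := hb y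
      by_cases hy : (y:ℕ) ≤ 2*g-1
      · exact ⟨r^((y:ℕ)-1), Subgroup.pow_mem _ hrmem _,
          Subtype.ext (by rw [hrpow _ (by omega)]; omega)⟩
      · refine ⟨u^((y:ℕ)-(2*g-1)) * r^(2*g-2),
          Subgroup.mul_mem _ (Subgroup.pow_mem _ humem _) (Subgroup.pow_mem _ hrmem _),
          Subtype.ext ?_⟩
        rw [Equiv.Perm.mul_apply, hupow _ (by omega)]
        omega
    intro x y
    obtain ⟨hx, hxm, hxe⟩ := reach x
    obtain ⟨hy, hym, hye⟩ := reach y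
    refine ⟨hy * hx⁻¹, Subgroup.mul_mem _ hym (Subgroup.inv_mem _ hxm), ?_⟩
    rw [Equiv.Perm.mul_apply, ← hxe, show hx⁻¹ (hx a) = a from Equiv.symm_apply_apply hx a, hye]
end

section
/- Let g ≥ 2 and d ≥ 2g−1 be integers. Define permutations r, u of {1, …, d} by: r is the cycle (1 2 … d), and u(i) = 2g−1−i for 1 ≤ i ≤ 2g−2, u(i) = i for all other i. Then the commutator ⁅r, u⁆ = r·u·r⁻¹·u⁻¹ is a single cycle of length 2g−1 fixing the remaining d−(2g−1) points, i.e., its cycle type is {2g−1}; moreover the subgroup generated by r and u acts transitively on {1, …, d}. -/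
open scoped commutatorElement

/-- For `g ≥ 2` and `d ≥ 2g−1`, let `r, u` be the permutations of `{1, …, d}` given by
`r = (1 2 … d)` and `u(i) = 2g−1−i` for `1 ≤ i ≤ 2g−2`, `u(i) = i` otherwise. Then the
commutator `⁅r, u⁆ = r u r⁻¹ u⁻¹` is a single `(2g−1)`-cycle fixing the remaining
`d − (2g−1)` points, i.e. its cycle type is `{2g−1}`, and the subgroup generated by
`r` and `u` acts transitively on `{1, …, d}`. -/
theorem commutator_cycleType_single_cycle (g d : ℕ) (hg : 2 ≤ g) (hd : 2 * g - 1 ≤ d)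
    (r u : Equiv.Perm {i : ℕ // i ∈ Finset.Icc 1 d})
    (hr : ∀ x, ((r x : ℕ) = if (x : ℕ) < d then (x : ℕ) + 1 else 1))
    (hu : ∀ x, ((u x : ℕ) =
      if (x : ℕ) ≤ 2 * g - 2 then 2 * g - 1 - (x : ℕ) else (x : ℕ))) :
    (⁅r, u⁆).cycleType = {2 * g - 1} ∧
    ∀ x y : {i : ℕ // i ∈ Finset.Icc 1 d},
      ∃ h ∈ Subgroup.closure ({r, u} : Set (Equiv.Perm {i : ℕ // i ∈ Finset.Icc 1 d})),
        h x = y := by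
  have hmem : ∀ x : {i : ℕ // i ∈ Finset.Icc 1 d}, 1 ≤ (x:ℕ) ∧ (x:ℕ) ≤ d :=
    fun x => Finset.mem_Icc.mp x.2
  have h1mem : (1 : ℕ) ∈ Finset.Icc 1 d := Finset.mem_Icc.mpr ⟨le_refl _, by omega⟩
  set one : {i : ℕ // i ∈ Finset.Icc 1 d} := ⟨1, h1mem⟩ with hone_def
  have hone_val : (one : ℕ) = 1 := rfl
  -- inverse formulas
  have hrinv : ∀ x, ((r⁻¹ x : ℕ) = if (x:ℕ) = 1 then d else (x:ℕ) - 1) := by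
    intro x
    have h := hr (r⁻¹ x)
    rw [show r (r⁻¹ x) = x from r.apply_symm_apply x] at h
    have h1 := hmem (r⁻¹ x); have h2 := hmem x
    split at h <;> split <;> omega
  have huinv : ∀ x, ((u⁻¹ x : ℕ) = if (x:ℕ) ≤ 2*g-2 then 2*g-1 - (x:ℕ) else (x:ℕ)) := by
    intro x
    have h := hu (u⁻¹ x)
    rw [show u (u⁻¹ x) = x from u.apply_symm_apply x] at h
    have h1 := hmem (u⁻¹ x); have h2 := hmem x
    split at h <;> split <;> omega
  -- commutator formula
  have hc : ∀ x, ((⁅r, u⁆ x : ℕ) =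
      if (x:ℕ) ≤ 2*g-3 then (x:ℕ)+2
      else if (x:ℕ) = 2*g-2 then 1
      else if (x:ℕ) = 2*g-1 then 2
      else (x:ℕ)) := by
    intro x
    have hx := hmem x
    show ((r * u * r⁻¹ * u⁻¹) x : ℕ) = _
    simp only [Equiv.Perm.mul_apply]
    rw [hr, hu, hrinv, huinv]
    split_ifs <;> omega
  have key_fix : ∀ x : {i : ℕ // i ∈ Finset.Icc 1 d}, 2*g-1 < (x:ℕ) → ⁅r,u⁆ x = x := by
    intro x h
    apply Subtype.ext
    rw [hc]
    split_ifs <;> omega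
  have key_move : ∀ x : {i : ℕ // i ∈ Finset.Icc 1 d}, (x:ℕ) ≤ 2*g-1 → ⁅r,u⁆ x ≠ x := by
    intro x h heq
    have hv := congrArg Subtype.val heq
    rw [hc x] at hv
    have hx := hmem x
    split_ifs at hv <;> omega
  -- support card
  have hcard : (⁅r,u⁆).support.card = 2*g-1 := by
    have hIcc : (Finset.Icc 1 (2*g-1)).card = 2*g-1 := by rw [Nat.card_Icc]; omega
    rw [← hIcc]
    refine Finset.card_bij' (fun a _ => (a : ℕ))
      (fun b hb => ⟨b, Finset.mem_Icc.mpr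
        ⟨(Finset.mem_Icc.mp hb).1, le_trans (Finset.mem_Icc.mp hb).2 hd⟩⟩) ?_ ?_ ?_ ?_
    · intro a ha
      rw [Equiv.Perm.mem_support] at ha
      show (a:ℕ) ∈ Finset.Icc 1 (2*g-1)
      refine Finset.mem_Icc.mpr ⟨(hmem a).1, ?_⟩
      by_contra h'
      exact ha (key_fix a (by omega))
    · intro b hb
      rw [Equiv.Perm.mem_support]
      exact key_move _ (Finset.mem_Icc.mp hb).2
    · intro a ha; rfl
    · intro b hb; rfl
  -- orbit of one
  have horb : ∀ k, k ≤ 2*g-2 → ((⁅r,u⁆ ^ k) one : ℕ) =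
      if k ≤ g-1 then 2*k+1 else 2*k + 2 - 2*g := by
    intro k
    induction k with
    | zero =>
      intro _
      simp only [pow_zero, Equiv.Perm.one_apply, hone_val]
      split_ifs <;> omega
    | succ k ih =>
      intro hk
      have ihv := ih (by omega)
      rw [pow_succ', Equiv.Perm.mul_apply, hc, ihv]
      split_ifs <;> omega
  have hreach : ∀ y : {i : ℕ // i ∈ Finset.Icc 1 d}, (y:ℕ) ≤ 2*g-1 →
      ∃ k, ((⁅r,u⁆ ^ k) one : ℕ) = (y:ℕ) := by
    intro y hy
    have hy1 := (hmem y).1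
    rcases Nat.even_or_odd (y:ℕ) with he | ho
    · rw [Nat.even_iff] at he
      refine ⟨g - 1 + (y:ℕ)/2, ?_⟩
      rw [horb _ (by omega)]
      split_ifs <;> omega
    · rw [Nat.odd_iff] at ho
      refine ⟨((y:ℕ)-1)/2, ?_⟩
      rw [horb _ (by omega)]
      split_ifs <;> omega
  have hcyc : (⁅r,u⁆).IsCycle := by
    refine ⟨one, key_move one (by rw [hone_val]; omega), ?_⟩
    intro y hy
    have hy' : (y:ℕ) ≤ 2*g-1 := by
      by_contra h; exact hy (key_fix y (by omega))
    obtain ⟨k, hkv⟩ := hreach y hy'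
    exact ⟨(k : ℤ), by rw [zpow_natCast]; exact Subtype.ext hkv⟩
  constructor
  · rw [Equiv.Perm.IsCycle.cycleType hcyc, hcard]
  · -- transitivity
    have hrpow : ∀ k, k ≤ d-1 → ((r ^ k) one : ℕ) = k + 1 := by
      intro k
      induction k with
      | zero => intro _; simp [hone_val]
      | succ k ih =>
        intro hk
        rw [pow_succ', Equiv.Perm.mul_apply, hr, ih (by omega)]
        rw [if_pos (by omega)]
    have hrd : (r ^ d) one = one := by
      have hde : r ^ d = r * r ^ (d-1) := by
        rw [← pow_succ']; congr 1; omega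
      apply Subtype.ext
      rw [hde, Equiv.Perm.mul_apply, hr, hrpow (d-1) (le_refl _)]
      rw [if_neg (by omega), hone_val]
    have honex : ∀ x : {i : ℕ // i ∈ Finset.Icc 1 d}, (r ^ ((x:ℕ)-1)) one = x := by
      intro x
      have hx := hmem x
      exact Subtype.ext (by rw [hrpow _ (by omega)]; omega)
    intro x y
    refine ⟨r ^ (((y:ℕ)-1) + (d - ((x:ℕ)-1))),
      Subgroup.pow_mem _ (Subgroup.subset_closure (by simp)) _, ?_⟩
    have hx := hmem x
    have h1 : (r ^ (d - ((x:ℕ)-1))) x = one := by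
      calc (r ^ (d - ((x:ℕ)-1))) x
          = (r ^ (d - ((x:ℕ)-1)) * r ^ ((x:ℕ)-1)) one := by
            rw [Equiv.Perm.mul_apply, honex x]
        _ = (r ^ d) one := by rw [← pow_add]; congr 2; omega
        _ = one := hrd
    rw [pow_add, Equiv.Perm.mul_apply, h1, honex y]
end

section
/- Let d ≥ 1 and k ≥ 0 be integers, and for each i = 1, …, k let A_i be a partition of d (a multiset of positive integers with sum d). Assume the parity condition: Σ_{i=1}^k Σ_{n ∈ A_i} (n − 1) is even. Then there exist permutations x, y, σ_1, …, σ_k of {1, …, d} such that: (i) for each i, the multiset of cardinalities of the orbits of the cyclic group generated by σ_i on {1, …, d} equals A_i; (ii) x·y·x⁻¹·y⁻¹ = σ_1·σ_2·⋯·σ_k; and (iii) the subgroup of S_d generated by x, y, σ_1, …, σ_k acts transitively on {1, …, d}. -/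
/-- The multiset of cardinalities of the orbits of the cyclic group generated by a
permutation `σ` of a finite type: its cycle lengths together with one part equal to `1`
for each fixed point. -/
def orbitSizes {α : Type*} [Fintype α] [DecidableEq α] (σ : Equiv.Perm α) : Multiset ℕ :=
  σ.cycleType + Multiset.replicate (Finset.univ.filter fun a => σ a = a).card 1



open Equiv Equiv.Perm Finset

namespace BranchAux

variable {α : Type*} [Fintype α] [DecidableEq α]

/-- `c` acts as a single cycle on `s` and fixes every point outside `s`. -/
def FullOn (c : Equiv.Perm α) (s : Finset α) : Prop :=
  c.IsCycleOn ↑s ∧ ∀ x ∉ s, c x = x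

lemma perm_bijOn_of_fixes (w : Equiv.Perm α) (s : Finset α) (h : ∀ x ∉ s, w x = x) :
    Set.BijOn w ↑s ↑s := by
  have hmem : ∀ x : α, x ∈ s → w x ∈ s := by
    intro x hx
    by_contra hwx
    have h1 : w (w x) = w x := h _ hwx
    have h2 : w x = x := w.injective h1
    rw [h2] at hwx; exact hwx hx
  have hmem' : ∀ x : α, x ∈ s → w⁻¹ x ∈ s := by
    intro x hx
    by_contra hwx
    have h1 : w (w⁻¹ x) = w⁻¹ x := h _ hwx
    rw [show w (w⁻¹ x) = x from w.apply_symm_apply x] at h1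
    rw [← h1] at hwx; exact hwx hx
  exact Set.InvOn.bijOn ⟨fun x _ => w.symm_apply_apply x, fun x _ => w.apply_symm_apply x⟩
    (fun x hx => hmem x hx) (fun x hx => hmem' x hx)

lemma FullOn.inv {c : Equiv.Perm α} {s : Finset α} (h : FullOn c s) : FullOn c⁻¹ s :=
  ⟨Equiv.Perm.isCycleOn_inv.mpr h.1, fun x hx => by
    have := h.2 x hx
    rw [Equiv.Perm.inv_eq_iff_eq]
    exact this.symm⟩

lemma FullOn.sign_eq {c : Equiv.Perm α} {s : Finset α} (h : FullOn c s) (hs : s.Nonempty) :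
    Equiv.Perm.sign c = -(-1 : ℤˣ) ^ s.card := by
  rcases eq_or_lt_of_le (Finset.one_le_card.mpr hs) with h1 | h1
  · obtain ⟨a, rfl⟩ := Finset.card_eq_one.mp h1.symm
    have hc : c = 1 := by
      ext x
      by_cases hx : x ∈ ({a} : Finset α)
      · have hxa : x = a := Finset.mem_singleton.mp hx
        subst hxa
        have := h.1
        rw [Finset.coe_singleton, Equiv.Perm.isCycleOn_singleton] at this
        simpa using this
      · simpa using h.2 x hx
    rw [hc, ← h1]
    simp
  · have hnt : (↑s : Set α).Nontrivial := by
      rw [Finset.one_lt_card_iff_nontrivial] at h1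
      exact h1
    have hc : c.IsCycle := Equiv.Perm.isCycle_iff_exists_isCycleOn.mpr
      ⟨↑s, hnt, h.1, fun x hx => by
        by_contra hxs
        exact hx (h.2 x (by simpa using hxs))⟩
    have hsupp : c.support = s := by
      ext x
      simp only [Equiv.Perm.mem_support]
      constructor
      · intro hx; by_contra hxs; exact hx (h.2 x hxs)
      · intro hx; exact h.1.apply_ne hnt (by simpa using hx)
    rw [hc.sign, hsupp]

lemma sameCycle_of_chain {w u : Equiv.Perm α} {S : Finset α} {a : α}
    (hagree : ∀ z ∈ S, z ≠ a → w z = u z) (hmaps : ∀ z ∈ S, u z ∈ S) :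
    ∀ (n : ℕ) (z : α), z ∈ S → (u ^ n) z = a → w.SameCycle z a := by
  intro n
  induction n with
  | zero =>
    intro z _ h0
    simp only [pow_zero, Equiv.Perm.one_apply] at h0
    exact h0 ▸ Equiv.Perm.SameCycle.refl w z
  | succ n ih =>
    intro z hz hn
    by_cases hza : z = a
    · exact hza ▸ Equiv.Perm.SameCycle.refl w z
    · have h1 : w z = u z := hagree z hz hza
      have h2 : (u ^ n) (u z) = a := by
        rw [pow_succ, Equiv.Perm.mul_apply] at hn; exact hn
      have h3 := ih (u z) (hmaps z hz) h2
      exact Equiv.Perm.SameCycle.trans ⟨1, by simpa using h1⟩ h3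

end BranchAux
section Part2
open Equiv Equiv.Perm Finset
namespace BranchAux

variable {α : Type*} [Fintype α] [DecidableEq α]

lemma fullOn_glue_right {u v : Equiv.Perm α} {S T : Finset α} {a b : α}
    (hu : FullOn u S) (hv : FullOn v T) (hST : Disjoint S T) (ha : a ∈ S) (hb : b ∈ T) :
    FullOn (u * v * Equiv.swap a b) (S ∪ T) := by
  classical
  set w := u * v * Equiv.swap a b with hw
  have haT : a ∉ T := Finset.disjoint_left.mp hST ha
  have hbS : b ∉ S := Finset.disjoint_right.mp hST hb
  have hmapsu : ∀ z ∈ S, u z ∈ S := fun z hz => by exact_mod_cast hu.1.1.mapsTo hz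
  have hmapsv : ∀ z ∈ T, v z ∈ T := fun z hz => by exact_mod_cast hv.1.1.mapsTo hz
  have hfix : ∀ x ∉ S ∪ T, w x = x := by
    intro x hx
    simp only [Finset.mem_union, not_or] at hx
    have hxa : x ≠ a := fun h => hx.1 (h ▸ ha)
    have hxb : x ≠ b := fun h => hx.2 (h ▸ hb)
    simp [hw, Equiv.Perm.mul_apply, Equiv.swap_apply_of_ne_of_ne hxa hxb,
      hv.2 x hx.2, hu.2 x hx.1]
  have hwS : ∀ z ∈ S, z ≠ a → w z = u z := by
    intro z hz hza
    have hzb : z ≠ b := fun h => hbS (h ▸ hz)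
    have hzT : z ∉ T := Finset.disjoint_left.mp hST hz
    simp [hw, Equiv.Perm.mul_apply, Equiv.swap_apply_of_ne_of_ne hza hzb, hv.2 z hzT]
  have hwT : ∀ z ∈ T, z ≠ b → w z = v z := by
    intro z hz hzb
    have hza : z ≠ a := fun h => haT (h ▸ hz)
    have hvz : v z ∉ S := Finset.disjoint_right.mp hST (hmapsv z hz)
    simp [hw, Equiv.Perm.mul_apply, Equiv.swap_apply_of_ne_of_ne hza hzb, hu.2 _ hvz]
  have hchainS : ∀ z ∈ S, w.SameCycle z a := by
    intro z hz
    obtain ⟨n, -, hn⟩ := hu.1.exists_pow_eq hz ha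
    exact sameCycle_of_chain hwS hmapsu n z hz hn
  have hchainT : ∀ z ∈ T, w.SameCycle z b := by
    intro z hz
    obtain ⟨n, -, hn⟩ := hv.1.exists_pow_eq hz hb
    exact sameCycle_of_chain hwT hmapsv n z hz hn
  have hba : w.SameCycle b a := by
    have h1 : w b = u a := by
      simp [hw, Equiv.Perm.mul_apply, Equiv.swap_apply_right, hv.2 a haT]
    exact Equiv.Perm.SameCycle.trans ⟨1, by simpa using h1⟩ (hchainS (u a) (hmapsu a ha))
  have hall : ∀ z ∈ S ∪ T, w.SameCycle z a := by
    intro z hz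
    rcases Finset.mem_union.mp hz with h | h
    · exact hchainS z h
    · exact (hchainT z h).trans hba
  refine ⟨⟨perm_bijOn_of_fixes w _ hfix, ?_⟩, hfix⟩
  intro x hx y hy
  have hx' : x ∈ S ∪ T := by exact_mod_cast hx
  have hy' : y ∈ S ∪ T := by exact_mod_cast hy
  exact (hall x hx').trans (hall y hy').symm

lemma fullOn_glue_left {u v : Equiv.Perm α} {S T : Finset α} {a b : α}
    (hu : FullOn u S) (hv : FullOn v T) (hST : Disjoint S T) (ha : a ∈ S) (hb : b ∈ T) :
    FullOn (Equiv.swap a b * u * v) (S ∪ T) := by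
  have h1 : FullOn (v⁻¹ * u⁻¹ * Equiv.swap b a) (T ∪ S) :=
    fullOn_glue_right hv.inv hu.inv hST.symm hb ha
  have h2 : (Equiv.swap a b * u * v)⁻¹ = v⁻¹ * u⁻¹ * Equiv.swap b a := by
    rw [mul_inv_rev, mul_inv_rev, Equiv.swap_inv, Equiv.swap_comm, mul_assoc]
  have h3 := h1.inv
  rw [← h2, inv_inv, Finset.union_comm] at h3
  exact h3

lemma fullOn_cycleOf (w : Equiv.Perm α) [DecidableRel w.SameCycle] (x : α) :
    FullOn (w.cycleOf x) (Finset.univ.filter fun z => w.SameCycle x z) := by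
  have hfix : ∀ z ∉ Finset.univ.filter (fun z => w.SameCycle x z), w.cycleOf x z = z := by
    intro z hz
    simp only [Finset.mem_filter, Finset.mem_univ, true_and] at hz
    exact Equiv.Perm.cycleOf_apply_of_not_sameCycle hz
  refine ⟨⟨perm_bijOn_of_fixes _ _ hfix, ?_⟩, hfix⟩
  intro z hz z' hz'
  have hz1 : w.SameCycle x z := by
    have := Finset.mem_coe.mp hz
    simpa using this
  have hz2 : w.SameCycle x z' := by
    have := Finset.mem_coe.mp hz'
    simpa using this
  obtain ⟨k, hk⟩ := hz1
  obtain ⟨k', hk'⟩ := hz2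
  have h1 : ((w.cycleOf x) ^ k) x = z := by rw [Equiv.Perm.cycleOf_zpow_apply_self, hk]
  have h2 : ((w.cycleOf x) ^ k') x = z' := by rw [Equiv.Perm.cycleOf_zpow_apply_self, hk']
  exact Equiv.Perm.SameCycle.trans
    (Equiv.Perm.SameCycle.symm (show (w.cycleOf x).SameCycle x z from ⟨k, h1⟩)) ⟨k', h2⟩

end BranchAux
end Part2
section Part3
open Equiv Equiv.Perm Finset
namespace BranchAux

variable {α : Type*} [Fintype α] [DecidableEq α]

lemma split_left {u : Equiv.Perm α} {s : Finset α} (hu : FullOn u s) {x y : α}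
    (hx : x ∈ s) (hy : y ∈ s) (hxy : x ≠ y) :
    ∃ (w₁ w₂ : Equiv.Perm α) (S₁ S₂ : Finset α), FullOn w₁ S₁ ∧ FullOn w₂ S₂ ∧
      Disjoint S₁ S₂ ∧ S₁ ∪ S₂ = s ∧ x ∈ S₁ ∧ y ∈ S₂ ∧
      Equiv.swap x y * u = w₁ * w₂ := by
  classical
  set w := Equiv.swap x y * u with hwdef
  have hmapsu : ∀ z ∈ s, u z ∈ s := fun z hz => by exact_mod_cast hu.1.1.mapsTo hz
  have hfix : ∀ z ∉ s, w z = z := by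
    intro z hz
    have hzx : z ≠ x := fun h => hz (h ▸ hx)
    have hzy : z ≠ y := fun h => hz (h ▸ hy)
    simp [hwdef, Equiv.Perm.mul_apply, hu.2 z hz, Equiv.swap_apply_of_ne_of_ne hzx hzy]
  -- every point of `s` lies on the `w`-cycle of `x` or of `y`
  have hbranch : ∀ z ∈ s, w.SameCycle x z ∨ w.SameCycle y z := by
    have key : ∀ (n : ℕ) (z : α), z ∈ s → (u ^ n) z = x →
        w.SameCycle z x ∨ w.SameCycle z y := by
      intro n
      induction n with
      | zero =>
        intro z _ h0
        simp only [pow_zero, Equiv.Perm.one_apply] at h0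
        exact Or.inl (h0 ▸ Equiv.Perm.SameCycle.refl w z)
      | succ n ih =>
        intro z hz hn
        rcases eq_or_ne (u z) x with h1 | h1
        · have hwz : w z = y := by simp [hwdef, Equiv.Perm.mul_apply, h1]
          exact Or.inr ⟨1, by simpa using hwz⟩
        rcases eq_or_ne (u z) y with h2 | h2
        · have hwz : w z = x := by
            simp [hwdef, Equiv.Perm.mul_apply, h2, Equiv.swap_apply_right]
          exact Or.inl ⟨1, by simpa using hwz⟩
        · have hwz : w z = u z := by
            simp [hwdef, Equiv.Perm.mul_apply, Equiv.swap_apply_of_ne_of_ne h1 h2]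
          have hn' : (u ^ n) (u z) = x := by
            rw [pow_succ, Equiv.Perm.mul_apply] at hn; exact hn
          rcases ih (u z) (hmapsu z hz) hn' with h | h
          · exact Or.inl (Equiv.Perm.SameCycle.trans ⟨1, by simpa using hwz⟩ h)
          · exact Or.inr (Equiv.Perm.SameCycle.trans ⟨1, by simpa using hwz⟩ h)
    intro z hz
    obtain ⟨n, -, hn⟩ := hu.1.exists_pow_eq hz hx
    rcases key n z hz hn with h | h
    · exact Or.inl h.symm
    · exact Or.inr h.symm
  have horb : ∀ t, t ∈ s → ∀ z, w.SameCycle t z → z ∈ s := by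
    intro t ht z htz
    by_contra hzs
    have hfixz : w z = z := hfix z hzs
    obtain ⟨i, hi⟩ := htz.symm
    rw [Equiv.Perm.zpow_apply_eq_self_of_apply_eq_self hfixz] at hi
    exact hzs (hi ▸ ht)
  -- `x` and `y` are on different `w`-cycles
  have hnotxy : ¬ w.SameCycle x y := by
    intro hxy'
    have hfull : FullOn w s := by
      refine ⟨⟨perm_bijOn_of_fixes w s hfix, ?_⟩, hfix⟩
      intro z hz z' hz'
      have h1 := hbranch z (Finset.mem_coe.mp hz)
      have h2 := hbranch z' (Finset.mem_coe.mp hz')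
      have hxz : w.SameCycle x z := by
        rcases h1 with h | h
        · exact h
        · exact hxy'.trans h
      have hxz' : w.SameCycle x z' := by
        rcases h2 with h | h
        · exact h
        · exact hxy'.trans h
      exact hxz.symm.trans hxz'
    have s1 := hfull.sign_eq ⟨x, hx⟩
    have s2 := hu.sign_eq ⟨x, hx⟩
    have hsw : Equiv.Perm.sign w = -Equiv.Perm.sign u := by
      rw [hwdef, map_mul, Equiv.Perm.sign_swap hxy, neg_one_mul]
    rw [s1, s2] at hsw
    have habs : (-1 : ℤˣ) ^ s.card = -(-1 : ℤˣ) ^ s.card := by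
      have := neg_injective hsw
      simpa using this.symm
    rcases Int.units_eq_one_or ((-1 : ℤˣ) ^ s.card) with h | h <;> rw [h] at habs <;>
      exact absurd habs (by decide)
  have hnotyx : ¬ w.SameCycle y x := fun h => hnotxy h.symm
  refine ⟨w.cycleOf x, w.cycleOf y, Finset.univ.filter (fun z => w.SameCycle x z),
    Finset.univ.filter (fun z => w.SameCycle y z), fullOn_cycleOf w x, fullOn_cycleOf w y,
    ?_, ?_, by simp [Equiv.Perm.SameCycle.refl], by simp [Equiv.Perm.SameCycle.refl], ?_⟩
  · rw [Finset.disjoint_left]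
    intro z hz1 hz2
    simp only [Finset.mem_filter, Finset.mem_univ, true_and] at hz1 hz2
    exact hnotxy (hz1.trans hz2.symm)
  · ext z
    simp only [Finset.mem_union, Finset.mem_filter, Finset.mem_univ, true_and]
    constructor
    · rintro (h | h)
      · exact horb x hx z h
      · exact horb y hy z h
    · exact hbranch z
  · ext z
    simp only [Equiv.Perm.mul_apply]
    by_cases hzx : w.SameCycle x z
    · have hzy : ¬ w.SameCycle y z := fun h => hnotxy (hzx.trans h.symm)
      rw [Equiv.Perm.cycleOf_apply_of_not_sameCycle hzy, Equiv.Perm.SameCycle.cycleOf_apply hzx]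
    · by_cases hzy : w.SameCycle y z
      · rw [Equiv.Perm.SameCycle.cycleOf_apply hzy]
        have hnw : ¬ w.SameCycle x (w z) := by
          intro h
          exact hzx (h.trans (Equiv.Perm.sameCycle_apply_right.mpr (Equiv.Perm.SameCycle.refl w z)).symm)
        rw [Equiv.Perm.cycleOf_apply_of_not_sameCycle hnw]
      · have hzs : z ∉ s := by
          intro hzs
          rcases hbranch z hzs with h | h
          · exact hzx h
          · exact hzy h
        rw [Equiv.Perm.cycleOf_apply_of_not_sameCycle hzy,
          Equiv.Perm.cycleOf_apply_of_not_sameCycle hzx]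
        exact hfix z hzs

end BranchAux
end Part3
section Part4
open Equiv Equiv.Perm Finset
namespace BranchAux

variable {α : Type*} [Fintype α] [DecidableEq α]

lemma swap_disjoint_of_fixes {g : Equiv.Perm α} {D : Finset α} {a b : α}
    (hg : ∀ x ∉ D, g x = x) (ha : a ∉ D) (hb : b ∉ D) :
    Equiv.Perm.Disjoint (Equiv.swap a b) g := by
  intro z
  by_cases hza : z = a
  · exact Or.inr (hza ▸ hg a ha)
  by_cases hzb : z = b
  · exact Or.inr (hzb ▸ hg b hb)
  · exact Or.inl (Equiv.swap_apply_of_ne_of_ne hza hzb)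

lemma three_glue {g1 g2 g3 v : Equiv.Perm α} {D1 D2 D3 : Finset α}
    (h1 : FullOn g1 D1) (h2 : FullOn g2 D2) (h3 : FullOn g3 D3)
    (d12 : Disjoint D1 D2) (d13 : Disjoint D1 D3) (d23 : Disjoint D2 D3)
    (hcover : D1 ∪ D2 ∪ D3 = Finset.univ)
    (n1 : D1.Nonempty) (n2 : D2.Nonempty) (n3 : D3.Nonempty)
    (hv : FullOn v Finset.univ) :
    ∃ U V : Equiv.Perm α, FullOn U Finset.univ ∧ FullOn V Finset.univ ∧
      g1 * g2 * g3 * v = U * V := by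
  classical
  obtain ⟨c1, hc1⟩ := n1
  obtain ⟨c2, hc2⟩ := n2
  have hc12 : c1 ≠ c2 := fun h => Finset.disjoint_left.mp d12 hc1 (h ▸ hc2)
  obtain ⟨v1, v2, P1, P2, hv1, hv2, hPd, hPu, hc1P, hc2P, hsplit⟩ :=
    split_left hv (Finset.mem_univ c1) (Finset.mem_univ c2) hc12
  -- σ₁ = swap c1 c2 commutes with g3
  have hcomm : Equiv.swap c1 c2 * g3 = g3 * Equiv.swap c1 c2 :=
    (swap_disjoint_of_fixes h3.2 (Finset.disjoint_left.mp d13 hc1)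
      (Finset.disjoint_left.mp d23 hc2)).commute.eq
  have hW1 : FullOn (g1 * g2 * Equiv.swap c1 c2) (D1 ∪ D2) :=
    fullOn_glue_right h1 h2 d12 hc1 hc2
  have hd123 : Disjoint (D1 ∪ D2) D3 := Finset.disjoint_union_left.mpr ⟨d13, d23⟩
  have hveq : v = Equiv.swap c1 c2 * (v1 * v2) := by
    rw [← hsplit, ← mul_assoc, Equiv.swap_mul_self, one_mul]
  -- choose the second transposition
  by_cases hD3P2 : (D3 ∩ P2).Nonempty
  · obtain ⟨c4, hc4⟩ := hD3P2
    have hc4D3 : c4 ∈ D3 := (Finset.mem_inter.mp hc4).1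
    have hc4P2 : c4 ∈ P2 := (Finset.mem_inter.mp hc4).2
    refine ⟨g1 * g2 * Equiv.swap c1 c2 * g3 * Equiv.swap c1 c4,
      Equiv.swap c1 c4 * v1 * v2, ?_, ?_, ?_⟩
    · have := fullOn_glue_right hW1 h3 hd123 (Finset.mem_union_left _ hc1) hc4D3
      rwa [hcover] at this
    · have := fullOn_glue_left hv1 hv2 hPd hc1P hc4P2
      rwa [hPu] at this
    · rw [hveq]
      have hswsw : Equiv.swap c1 c4 * (Equiv.swap c1 c4 * (v1 * v2)) = v1 * v2 := by
        rw [← mul_assoc, Equiv.swap_mul_self, one_mul]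
      calc g1 * g2 * g3 * (Equiv.swap c1 c2 * (v1 * v2))
          = g1 * g2 * (g3 * Equiv.swap c1 c2) * (v1 * v2) := by
            simp only [mul_assoc]
        _ = g1 * g2 * (Equiv.swap c1 c2 * g3) * (v1 * v2) := by rw [hcomm]
        _ = g1 * g2 * Equiv.swap c1 c2 * g3 * Equiv.swap c1 c4 *
              (Equiv.swap c1 c4 * v1 * v2) := by
            simp only [mul_assoc, hswsw]
  · have hD3P1 : ∀ z ∈ D3, z ∈ P1 := by
      intro z hz
      have hzuniv : z ∈ P1 ∪ P2 := by rw [hPu]; exact Finset.mem_univ z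
      rcases Finset.mem_union.mp hzuniv with h | h
      · exact h
      · exact absurd ⟨z, Finset.mem_inter.mpr ⟨hz, h⟩⟩ hD3P2
    obtain ⟨c4, hc4D3⟩ := n3
    have hc4P1 : c4 ∈ P1 := hD3P1 c4 hc4D3
    refine ⟨g1 * g2 * Equiv.swap c1 c2 * g3 * Equiv.swap c2 c4,
      Equiv.swap c2 c4 * v1 * v2, ?_, ?_, ?_⟩
    · have := fullOn_glue_right hW1 h3 hd123 (Finset.mem_union_right _ hc2) hc4D3
      rwa [hcover] at this
    · have := fullOn_glue_left hv1 hv2 hPd hc4P1 hc2P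
      rw [Equiv.swap_comm c4 c2] at this
      rwa [hPu] at this
    · rw [hveq]
      have hswsw : Equiv.swap c2 c4 * (Equiv.swap c2 c4 * (v1 * v2)) = v1 * v2 := by
        rw [← mul_assoc, Equiv.swap_mul_self, one_mul]
      calc g1 * g2 * g3 * (Equiv.swap c1 c2 * (v1 * v2))
          = g1 * g2 * (g3 * Equiv.swap c1 c2) * (v1 * v2) := by
            simp only [mul_assoc]
        _ = g1 * g2 * (Equiv.swap c1 c2 * g3) * (v1 * v2) := by rw [hcomm]
        _ = g1 * g2 * Equiv.swap c1 c2 * g3 * Equiv.swap c2 c4 *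
              (Equiv.swap c2 c4 * v1 * v2) := by
            simp only [mul_assoc, hswsw]

end BranchAux
end Part4
section Part5
open Equiv Equiv.Perm Finset
namespace BranchAux

variable {α : Type*} [Fintype α] [DecidableEq α]

lemma one_eq_two_fullOn :
    ∃ u v : Equiv.Perm α, FullOn u Finset.univ ∧ FullOn v Finset.univ ∧ (1 : Equiv.Perm α) = u * v := by
  obtain ⟨c, hc1, hc2⟩ := Finset.exists_cycleOn (Finset.univ : Finset α)
  have hfull : FullOn c Finset.univ := ⟨hc1, fun x hx => absurd (Finset.mem_univ x) hx⟩
  exact ⟨c, c⁻¹, hfull, hfull.inv, by simp⟩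

lemma strip (π : Equiv.Perm α) (hne : π ≠ 1) :
    ∃ x0 : α, π x0 ≠ x0 ∧ x0 ∈ π.support ∧
      (Equiv.swap x0 (π x0) * π).support ⊆ π.support.erase x0 ∧
      Equiv.Perm.sign (Equiv.swap x0 (π x0) * π) = -Equiv.Perm.sign π ∧
      π = Equiv.swap x0 (π x0) * (Equiv.swap x0 (π x0) * π) := by
  have hsupp : π.support.Nonempty := by
    rw [Finset.nonempty_iff_ne_empty]
    intro h; exact hne (Equiv.Perm.support_eq_empty_iff.mp h)
  obtain ⟨x0, hx0s⟩ := hsupp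
  have hx0 : π x0 ≠ x0 := Equiv.Perm.mem_support.mp hx0s
  refine ⟨x0, hx0, hx0s, ?_, ?_, ?_⟩
  · intro z hz
    have hz' : (Equiv.swap x0 (π x0) * π) z ≠ z := Equiv.Perm.mem_support.mp hz
    rw [Finset.mem_erase]
    constructor
    · intro hzx0
      apply hz'
      rw [hzx0]
      simp [Equiv.Perm.mul_apply, Equiv.swap_apply_right]
    · by_contra hzs
      apply hz'
      have hπz : π z = z := by
        by_contra h
        exact hzs (Equiv.Perm.mem_support.mpr h)
      have hzx0' : z ≠ x0 := fun h => hx0 (by rw [← h]; exact hπz)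
      have hzy0 : z ≠ π x0 := by
        intro h
        have : π z = π x0 := by rw [hπz, h]
        exact hzx0' (π.injective this)
      rw [Equiv.Perm.mul_apply, hπz, Equiv.swap_apply_of_ne_of_ne hzx0' hzy0]
  · rw [map_mul, Equiv.Perm.sign_swap (Ne.symm hx0), neg_one_mul]
  · rw [← mul_assoc, Equiv.swap_mul_self, one_mul]

lemma exists_two_fullOn_aux :
    ∀ (n : ℕ) (π : Equiv.Perm α), π.support.card ≤ n → Equiv.Perm.sign π = 1 →
      ∃ u v : Equiv.Perm α, FullOn u Finset.univ ∧ FullOn v Finset.univ ∧ π = u * v := by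
  intro n
  induction n with
  | zero =>
    intro π hcard _
    have hπ : π = 1 := by
      rw [← Equiv.Perm.support_eq_empty_iff, ← Finset.card_eq_zero]
      omega
    obtain ⟨u, v, h1, h2, h3⟩ := one_eq_two_fullOn (α := α)
    exact ⟨u, v, h1, h2, hπ ▸ h3⟩
  | succ n ih =>
    intro π hcard hsign
    by_cases hπ1 : π = 1
    · obtain ⟨u, v, h1, h2, h3⟩ := one_eq_two_fullOn (α := α)
      exact ⟨u, v, h1, h2, hπ1 ▸ h3⟩
    obtain ⟨x0, hx0, hx0m, hsub1, hsg1, heq1⟩ := strip π hπ1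
    set y0 := π x0 with hy0def
    set π1 := Equiv.swap x0 y0 * π with hπ1def
    have hx0y0 : x0 ≠ y0 := Ne.symm hx0
    have hsign1 : Equiv.Perm.sign π1 = -1 := by rw [hπ1def, hsg1, hsign]
    have hπ1ne : π1 ≠ 1 := by
      intro h
      rw [h, map_one] at hsign1
      exact absurd hsign1 (by decide)
    obtain ⟨x1, hx1, hx1m, hsub2, hsg2, heq2⟩ := strip π1 hπ1ne
    set y1 := π1 x1 with hy1def
    set π2 := Equiv.swap x1 y1 * π1 with hπ2def
    have hx1y1 : x1 ≠ y1 := Ne.symm hx1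
    have hsign2 : Equiv.Perm.sign π2 = 1 := by
      rw [hπ2def, hsg2, hsign1]; decide
    have hcard2 : π2.support.card ≤ n := by
      have h1 : π1.support.card ≤ π.support.card - 1 := by
        have := Finset.card_le_card hsub1
        rwa [Finset.card_erase_of_mem hx0m] at this
      have h2 : π2.support.card ≤ π1.support.card - 1 := by
        have := Finset.card_le_card hsub2
        rwa [Finset.card_erase_of_mem hx1m] at this
      have h3 : 0 < π.support.card := Finset.card_pos.mpr ⟨x0, hx0m⟩
      have h4 : 0 < π1.support.card := Finset.card_pos.mpr ⟨x1, hx1m⟩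
      omega
    obtain ⟨u, v, hu, hv, huv⟩ := ih π2 hcard2 hsign2
    obtain ⟨u1, u2, A1, A2, hu1, hu2, hA12, hAu, hx1A1, hy1A2, hsplit2⟩ :=
      split_left hu (Finset.mem_univ x1) (Finset.mem_univ y1) hx1y1
    -- π = τ1 * (u1 * u2 * v)
    have hπform : π = Equiv.swap x0 y0 * (u1 * u2 * v) := by
      rw [heq1, heq2, huv, ← mul_assoc (Equiv.swap x1 y1) u v, hsplit2]
    have hmem : ∀ z : α, z ∈ A1 ∨ z ∈ A2 := by
      intro z
      have : z ∈ A1 ∪ A2 := by rw [hAu]; exact Finset.mem_univ z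
      exact Finset.mem_union.mp this
    rcases hmem x0 with hx0A | hx0A <;> rcases hmem y0 with hy0A | hy0A
    -- both in A1
    · obtain ⟨w1, w2, B1, B2, hw1, hw2, hB12, hBu, hx0B1, hy0B2, hsplit3⟩ :=
        split_left hu1 hx0A hy0A hx0y0
      have hB1A2 : Disjoint B1 A2 := Finset.disjoint_of_subset_left
        (hBu ▸ Finset.subset_union_left) hA12
      have hB2A2 : Disjoint B2 A2 := Finset.disjoint_of_subset_left
        (hBu ▸ Finset.subset_union_right) hA12
      have hcover : B1 ∪ B2 ∪ A2 = Finset.univ := by rw [hBu, hAu]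
      obtain ⟨U, V, hU, hV, hUV⟩ := three_glue hw1 hw2 hu2 hB12 hB1A2 hB2A2 hcover
        ⟨x0, hx0B1⟩ ⟨y0, hy0B2⟩ ⟨y1, hy1A2⟩ hv
      refine ⟨U, V, hU, hV, ?_⟩
      rw [← hUV, hπform]
      simp only [← mul_assoc]
      rw [hsplit3]
    -- x0 ∈ A1, y0 ∈ A2
    · have hglue := fullOn_glue_left hu1 hu2 hA12 hx0A hy0A
      rw [hAu] at hglue
      refine ⟨Equiv.swap x0 y0 * u1 * u2, v, hglue, hv, ?_⟩
      rw [hπform]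
      simp only [mul_assoc]
    -- x0 ∈ A2, y0 ∈ A1
    · have hglue := fullOn_glue_left hu1 hu2 hA12 hy0A hx0A
      rw [hAu, Equiv.swap_comm y0 x0] at hglue
      refine ⟨Equiv.swap x0 y0 * u1 * u2, v, hglue, hv, ?_⟩
      rw [hπform]
      simp only [mul_assoc]
    -- both in A2
    · have hτcomm : Equiv.swap x0 y0 * u1 = u1 * Equiv.swap x0 y0 := by
        exact (swap_disjoint_of_fixes hu1.2 (Finset.disjoint_right.mp hA12 hx0A)
          (Finset.disjoint_right.mp hA12 hy0A)).commute.eq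
      obtain ⟨w1, w2, B1, B2, hw1, hw2, hB12, hBu, hx0B1, hy0B2, hsplit3⟩ :=
        split_left hu2 hx0A hy0A hx0y0
      have hA1B1 : Disjoint A1 B1 := Finset.disjoint_of_subset_right
        (hBu ▸ Finset.subset_union_left) hA12
      have hA1B2 : Disjoint A1 B2 := Finset.disjoint_of_subset_right
        (hBu ▸ Finset.subset_union_right) hA12
      have hcover : A1 ∪ B1 ∪ B2 = Finset.univ := by
        rw [Finset.union_assoc, hBu, hAu]
      obtain ⟨U, V, hU, hV, hUV⟩ := three_glue hu1 hw1 hw2 hA1B1 hA1B2 hB12 hcover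
        ⟨x1, hx1A1⟩ ⟨x0, hx0B1⟩ ⟨y0, hy0B2⟩ hv
      refine ⟨U, V, hU, hV, ?_⟩
      rw [← hUV, hπform]
      simp only [← mul_assoc]
      rw [hτcomm, mul_assoc u1 (Equiv.swap x0 y0) u2, hsplit3]
      simp only [← mul_assoc]

end BranchAux
end Part5
section Part6
open Equiv Equiv.Perm Finset

namespace BranchAux

variable {α : Type*} [Fintype α] [DecidableEq α]

lemma multiset_map_sub_one_sum :
    ∀ m : Multiset ℕ, (∀ a ∈ m, 1 ≤ a) →
      (m.map fun n => n - 1).sum + Multiset.card m = m.sum := by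
  intro m
  induction m using Multiset.induction_on with
  | empty => intro _; simp
  | cons a s ih =>
    intro h
    simp only [Multiset.map_cons, Multiset.sum_cons, Multiset.card_cons]
    have ha : 1 ≤ a := h a (Multiset.mem_cons_self _ _)
    have hs := ih (fun b hb => h b (Multiset.mem_cons_of_mem hb))
    omega

lemma FullOn.isCycle_univ {c : Equiv.Perm α} (h : FullOn c Finset.univ)
    (h2 : 1 < Fintype.card α) : c.IsCycle ∧ c.support = Finset.univ := by
  have h2' : 1 < (Finset.univ : Finset α).card := by rwa [Finset.card_univ]
  have hnt : (↑(Finset.univ : Finset α) : Set α).Nontrivial := by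
    rw [Finset.one_lt_card_iff_nontrivial] at h2'
    exact h2'
  have hc : c.IsCycle := Equiv.Perm.isCycle_iff_exists_isCycleOn.mpr
    ⟨↑(Finset.univ : Finset α), hnt, h.1, fun x hx => by simp⟩
  refine ⟨hc, ?_⟩
  ext x
  simp only [Equiv.Perm.mem_support, Finset.mem_univ, iff_true]
  exact h.1.apply_ne hnt (by simp)

end BranchAux

lemma exists_perm_orbitSizes (d : ℕ) (A : Nat.Partition d) :
    ∃ g : Equiv.Perm (Fin d), orbitSizes g = A.parts ∧
      Equiv.Perm.sign g = (-1 : ℤˣ) ^ ((A.parts.map fun n => n - 1).sum) := by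
  classical
  set m := A.parts.filter (fun n => 2 ≤ n) with hm
  set ones := A.parts.filter (fun n => ¬ 2 ≤ n) with hones
  have hsplit : m + ones = A.parts := Multiset.filter_add_not _ _
  have hone : ∀ b ∈ ones, b = 1 := by
    intro b hb
    rw [hones, Multiset.mem_filter] at hb
    have := A.parts_pos hb.1
    omega
  have hrep : ones = Multiset.replicate (Multiset.card ones) 1 :=
    Multiset.eq_replicate_card.mpr hone
  have honesum : ones.sum = Multiset.card ones := by
    conv_lhs => rw [hrep]
    rw [Multiset.sum_replicate, smul_eq_mul, mul_one]
  have hsum : m.sum + Multiset.card ones = d := by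
    have h1 : m.sum + ones.sum = d := by
      rw [← Multiset.sum_add, hsplit, A.parts_sum]
    omega
  obtain ⟨g, hg⟩ := (Equiv.Perm.exists_with_cycleType_iff (Fin d) (m := m)).mpr
    ⟨by rw [Fintype.card_fin]; omega, fun a ha => (Multiset.mem_filter.mp ha).2⟩
  have hsuppcard : g.support.card = m.sum := by
    rw [← Equiv.Perm.sum_cycleType, hg]
  have hfixcard : (Finset.univ.filter fun a => g a = a).card = Multiset.card ones := by
    have hset : (Finset.univ.filter fun a => g a = a) = g.supportᶜ := by
      ext a
      simp [Equiv.Perm.mem_support]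
    rw [hset, Finset.card_compl, hsuppcard, Fintype.card_fin]
    omega
  have hm1 : ∀ a ∈ m, 1 ≤ a := fun a ha => le_trans (by norm_num)
    (Multiset.mem_filter.mp ha).2
  have e2 := BranchAux.multiset_map_sub_one_sum m hm1
  have e1 : ((A.parts.map fun n => n - 1)).sum = ((m.map fun n => n - 1)).sum := by
    rw [← hsplit, Multiset.map_add, Multiset.sum_add]
    have : ((ones.map fun n => n - 1)).sum = 0 := by
      rw [hrep, Multiset.map_replicate, Multiset.sum_replicate]
      simp
    omega
  refine ⟨g, ?_, ?_⟩
  · unfold orbitSizes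
    rw [hg, hfixcard, ← hrep, hsplit]
  · rw [Equiv.Perm.sign_of_cycleType, hg, e1]
    have hexp : m.sum + Multiset.card m =
        ((m.map fun n => n - 1)).sum + 2 * Multiset.card m := by omega
    rw [hexp, pow_add, pow_mul, neg_one_sq, one_pow, mul_one]

end Part6

/-- Realisability of candidate branch data by connected covers of the torus:
given `d ≥ 1` and partitions `A_1, …, A_k` of `d` satisfying the Riemann–Hurwitz
parity condition, there exist permutations `x, y, σ_1, …, σ_k` of a `d`-element set
such that each `σ_i` has orbit-size multiset `A_i`, the commutator relation
`x y x⁻¹ y⁻¹ = σ_1 σ_2 ⋯ σ_k` holds, and the subgroup generated by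
`x, y, σ_1, …, σ_k` is transitive. -/
theorem branch_data_realisable_on_torus (d k : ℕ) (hd : 1 ≤ d)
    (A : Fin k → Nat.Partition d)
    (hparity : Even (∑ i : Fin k, ((A i).parts.map fun n => n - 1).sum)) :
    ∃ (x y : Equiv.Perm (Fin d)) (σ : Fin k → Equiv.Perm (Fin d)),
      (∀ i, orbitSizes (σ i) = (A i).parts) ∧
      x * y * x⁻¹ * y⁻¹ = ((List.finRange k).map σ).prod ∧
      (∀ a b : Fin d,
        ∃ h ∈ Subgroup.closure (({x, y} ∪ Set.range σ : Set (Equiv.Perm (Fin d)))),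
          h a = b) := by
  classical
  choose g hg1 hg2 using fun i => exists_perm_orbitSizes d (A i)
  set π := ((List.finRange k).map g).prod with hπ
  have hsignπ : Equiv.Perm.sign π = 1 := by
    rw [hπ, map_list_prod, List.map_map]
    have hfun : (Equiv.Perm.sign ∘ g) =
        fun i => (-1 : ℤˣ) ^ ((A i).parts.map fun n => n - 1).sum := by
      funext i
      simp [hg2 i]
    rw [hfun, ← Fin.prod_univ_def, Finset.prod_pow_eq_pow_sum]
    exact Even.neg_one_pow hparity
  obtain ⟨u, v, hu, hv, huv⟩ :=
    BranchAux.exists_two_fullOn_aux π.support.card π le_rfl hsignπ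
  have hconj : ∃ y : Equiv.Perm (Fin d), y * u⁻¹ * y⁻¹ = v := by
    rcases le_or_gt d 1 with hd1 | hd1
    · haveI : Subsingleton (Fin d) := by
        interval_cases d
        exact Fin.subsingleton_one
      exact ⟨1, Equiv.ext fun x => Subsingleton.elim _ _⟩
    · have hcard : 1 < Fintype.card (Fin d) := by rwa [Fintype.card_fin]
      obtain ⟨hcu, hsu⟩ := BranchAux.FullOn.isCycle_univ hu hcard
      obtain ⟨hcv, hsv⟩ := BranchAux.FullOn.isCycle_univ hv hcard
      have hconj' : IsConj u⁻¹ v := by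
        refine Equiv.Perm.IsCycle.isConj hcu.inv hcv ?_
        rw [Equiv.Perm.support_inv, hsu, hsv]
      exact isConj_iff.mp hconj'
  obtain ⟨y, hy⟩ := hconj
  refine ⟨u, y, g, hg1, ?_, ?_⟩
  · have hassoc : u * y * u⁻¹ * y⁻¹ = u * (y * u⁻¹ * y⁻¹) := by
      simp only [mul_assoc]
    rw [hassoc, hy, ← huv]
  · intro a b
    have hsc : u.SameCycle a b :=
      hu.1.2 (Finset.mem_coe.mpr (Finset.mem_univ a)) (Finset.mem_coe.mpr (Finset.mem_univ b))
    obtain ⟨kk, hkk⟩ := hsc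
    refine ⟨u ^ kk, ?_, hkk⟩
    apply Subgroup.zpow_mem
    apply Subgroup.subset_closure
    exact Set.mem_union_left _ (Set.mem_insert _ _)
end
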